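/- arXiv:2011.14895 — 3 statements merged into one kernel-verified Lean document; each statement's English description precedes it below -/
import Mathlib

section
/- Let x ∈ ℝ^{n_0} be a regular vertex. Then x is a local minimum of f, i.e. there exists ε>0 with f(x) = inf{f(y) : y ∈ B_ε(x)}, if and only if for every region separating axis a ∈ A(x) there exist s ∈ S^C(x) and (l,j) ∈ C̃_s(x) with a = ã_{x,s,l,j} and ⟨ã_{x,s,l,j}, ∇_s⟩ ≥ 0. -/
/-!
Formalization of the setting of "Deep ReLU Programming" (Hinz & van de Geer).

A feed-forward ReLU network with `L` hidden layers and widths `n 0, …, n (L+1)`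
(`n (L+1) = 1` for a real-valued network) is encoded by the structure `Net L n`
below, where `W k : Matrix (Fin (n (k+1))) (Fin (n k)) ℝ` and
`b k : Fin (n (k+1)) → ℝ` are the weight matrix and bias vector of layer `k+1`
(so the paper's `W_l, b_l` correspond to `W (l-1), b (l-1)` here).

A neuron `(l, j)` of the paper (layer `l ∈ {1, …, L}`, neuron `j`) is encoded as
the pair `⟨k, j⟩ : Idx n` with `k = l - 1`; membership in the index set `I`
corresponds to the condition `k < L`.
-/

noncomputable section
open Metric Filter Topology
open scoped Classical RealInnerProductSpace BigOperators

namespace DRLP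

/-- Input space `ℝ^{n 0}` with the Euclidean metric and inner product. -/
abbrev Input (n : ℕ → ℕ) := EuclideanSpace ℝ (Fin (n 0))

/-- Patterns: one real number for each neuron `⟨k, j⟩` (neuron `j` of layer `k+1`). -/
abbrev Pat (n : ℕ → ℕ) := ∀ k : ℕ, Fin (n (k+1)) → ℝ

/-- Neuron indices: `⟨k, j⟩` denotes neuron `j` of layer `k+1`. -/
abbrev Idx (n : ℕ → ℕ) := Σ k : ℕ, Fin (n (k+1))

/-- `s` is an activation pattern (element of `S = {0,1}^{n_1} × ⋯ × {0,1}^{n_L}`). -/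
def IsPattern (L : ℕ) {n : ℕ → ℕ} (s : Pat n) : Prop :=
  ∀ k < L, ∀ j, s k j = 0 ∨ s k j = 1

/-- Compatibility of a (hyperplane) pattern `h` with an activation pattern `s`:
`h_{lj} (s_{lj} - 0.5) ≥ 0` for all neurons `(l,j) ∈ I`. -/
def PatCompatible (L : ℕ) {n : ℕ → ℕ} (h s : Pat n) : Prop :=
  ∀ k < L, ∀ j, h k j * (s k j - 1/2) ≥ 0

/-- A feed-forward ReLU network with `L` hidden layers and widths `n 0, …, n (L+1)`. -/
structure Net (L : ℕ) (n : ℕ → ℕ) : Type where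
  W : ∀ k : ℕ, Matrix (Fin (n (k+1))) (Fin (n k)) ℝ
  b : ∀ k : ℕ, Fin (n (k+1)) → ℝ

namespace Net

variable {L : ℕ} {n : ℕ → ℕ} (N : Net L n)

/-- Output of layer `k` (entrywise ReLU applied); layer `0` is the input itself. -/
def hid (x : Input n) : (k : ℕ) → Fin (n k) → ℝ
  | 0 => fun i => x i
  | k + 1 => fun j => max ((N.W k).mulVec (hid x k) j + N.b k j) 0

/-- The ReLU arguments `A(x)`: pre-activation of neuron `j` in layer `k+1`. -/
def preact (x : Input n) (k : ℕ) (j : Fin (n (k+1))) : ℝ :=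
  (N.W k).mulVec (N.hid x k) j + N.b k j

/-- The hyperplane pattern `H(x) = sign.(A(x))`. -/
def Hpat (x : Input n) (k : ℕ) (j : Fin (n (k+1))) : ℝ :=
  Real.sign (N.preact x k j)

/-- Subjective hidden layers: activations frozen to the pattern `s`. -/
def shid (s : Pat n) (x : Input n) : (k : ℕ) → Fin (n k) → ℝ
  | 0 => fun i => x i
  | k + 1 => fun j => s k j * ((N.W k).mulVec (shid s x k) j + N.b k j)

/-- The subjective ReLU arguments `Ã_s(x)`. -/
def spreact (s : Pat n) (x : Input n) (k : ℕ) (j : Fin (n (k+1))) : ℝ :=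
  (N.W k).mulVec (N.shid s x k) j + N.b k j

/-- The subjective hyperplane pattern `H̃_s(x) = sign.(Ã_s(x))`. -/
def sHpat (s : Pat n) (x : Input n) (k : ℕ) (j : Fin (n (k+1))) : ℝ :=
  Real.sign (N.spreact s x k j)

/-- `S^C(x)`: activation patterns compatible with the hyperplane pattern `H(x)`. -/
def SC (x : Input n) : Set (Pat n) :=
  {s | IsPattern L s ∧ PatCompatible L (N.Hpat x) s}

/-- `S̃^C(x)`: activation patterns compatible with their own induced subjective
hyperplane pattern `H̃_s(x)`. -/
def SCtilde (x : Input n) : Set (Pat n) :=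
  {s | IsPattern L s ∧ PatCompatible L (N.sHpat s x) s}

/-- `C(x)`: critical indices, i.e. neurons whose hyperplane pattern is non-constant in
every neighbourhood of `x`. -/
def Critical (x : Input n) (p : Idx n) : Prop :=
  p.1 < L ∧ ∀ ε > 0, ∃ y z : Input n, dist y x < ε ∧ dist z x < ε ∧
    N.Hpat y p.1 p.2 ≠ N.Hpat z p.1 p.2

/-- `C̃_s(x)`: subjective critical indices. -/
def sCritical (s : Pat n) (x : Input n) (p : Idx n) : Prop :=
  p.1 < L ∧ ∀ ε > 0, ∃ y z : Input n, dist y x < ε ∧ dist z x < ε ∧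
    N.sHpat s y p.1 p.2 ≠ N.sHpat s z p.1 p.2

/-- The critical kernel `Ker^C(x)`. -/
def KerC (x : Input n) : Set (Input n) :=
  {v | ∃ ε > 0, ∀ t : ℝ, |t| < ε → ∀ p : Idx n, p.1 < L →
    N.Hpat (x + t • v) p.1 p.2 = N.Hpat x p.1 p.2}

/-- The subjective critical kernel `K̃er^C_s(x)`. -/
def sKerC (s : Pat n) (x : Input n) : Set (Input n) :=
  {v | ∃ ε > 0, ∀ t : ℝ, |t| < ε → ∀ p : Idx n, p.1 < L →
    N.sHpat s (x + t • v) p.1 p.2 = N.sHpat s x p.1 p.2}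

/-- Critical degrees of freedom `df^C(x) = dim Ker^C(x)`. -/
def dfC (x : Input n) : ℕ :=
  Module.finrank ℝ (Submodule.span ℝ (N.KerC x))

/-- `x` is a vertex iff `df^C(x) = 0`. -/
def IsVertex (x : Input n) : Prop := N.dfC x = 0

/-- The matrix `W_{k+1} diag(s_k) W_k ⋯ diag(s_1) W_1`. -/
def sMat (s : Pat n) : (k : ℕ) → Matrix (Fin (n (k+1))) (Fin (n 0)) ℝ
  | 0 => N.W 0
  | k + 1 => N.W (k+1) * Matrix.diagonal (s k) * sMat s k

/-- The normal vector `ṽ_{s,l,j}` (transpose of the `j`-th row of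
`W_l diag(s_{l-1}) ⋯ diag(s_1) W_1`). -/
def nvec (s : Pat n) (p : Idx n) : Input n :=
  WithLp.toLp 2 (fun i => N.sMat s p.1 p.2 i)

/-- The oriented normal vector `ũ_{s,l,j}`. -/
def onvec (s : Pat n) (p : Idx n) : Input n :=
  if s p.1 p.2 = 1 then N.nvec s p else -N.nvec s p

/-- The gradient `∇_s = (W_{L+1} diag(s_L) ⋯ diag(s_1) W_1)ᵀ ∈ ℝ^{n_0}`. -/
def grad (h1 : n (L+1) = 1) (s : Pat n) : Input n :=
  N.nvec s ⟨L, Fin.cast h1.symm 0⟩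

/-- The (real-valued) network function `f`. -/
def fnet (h1 : n (L+1) = 1) (x : Input n) : ℝ :=
  N.preact x L (Fin.cast h1.symm 0)

/-- The subjective network function `f̃_s`. -/
def sfnet (h1 : n (L+1) = 1) (s : Pat n) (x : Input n) : ℝ :=
  N.spreact s x L (Fin.cast h1.symm 0)

/-- The feasible directions `D̃_s(x)`. -/
def Dfeas (s : Pat n) (x : Input n) : Set (Input n) :=
  {v | ∃ ε > 0, s ∈ N.SC (x + ε • v)}

/-- `x` is a regular point: for every compatible activation pattern `s ∈ S^C(x)`, the
normal vectors at the subjective critical indices are linearly independent. -/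
def RegularPoint (x : Input n) : Prop :=
  ∀ s ∈ N.SC x, LinearIndependent ℝ
    (fun p : {p : Idx n // N.sCritical s x p} => N.nvec s p.1)

/-- The network is regular if every point is a regular point. -/
def Regular : Prop := ∀ x : Input n, N.RegularPoint x

/-- `w` is the feasible axis `ã_{x,s,l,j}` at `x` for the activation pattern `s` and the
critical index `p = (l,j)`: it pairs to `1` with the oriented normal vector of `p` and
to `0` with the oriented normal vectors of all other critical indices of `x`. -/
def IsAxis (x : Input n) (s : Pat n) (p : Idx n) (w : Input n) : Prop :=
  ∀ q : Idx n, N.Critical x q → ⟪w, N.onvec s q⟫ = if p = q then 1 else 0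

/-- The region separating axes `𝒜(x)`. -/
def RegionSepAxes (x : Input n) : Set (Input n) :=
  {w | ∃ s ∈ N.SC x, ∃ p : Idx n, N.Critical x p ∧ N.IsAxis x s p w}

/-! ### Auxiliary lemmas -/

lemma relu_eq_of_compat {a s : ℝ} (hs : s = 0 ∨ s = 1)
    (h : Real.sign a * (s - 1/2) ≥ 0) : max a 0 = s * a := by
  rcases hs with rfl | rfl
  · rcases lt_trichotomy a 0 with h'|h'|h'
    · simp [max_eq_right h'.le]
    · simp [h']
    · rw [Real.sign_of_pos h'] at h; norm_num at h
  · rcases lt_trichotomy a 0 with h'|h'|h'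
    · rw [Real.sign_of_neg h'] at h; norm_num at h
    · simp [h']
    · simp [max_eq_left h'.le]

lemma continuous_hid : ∀ (k : ℕ) (i : Fin (n k)),
    Continuous (fun y : Input n => N.hid y k i) := by
  intro k
  induction k with
  | zero => intro i; exact (continuous_apply i).comp (PiLp.continuous_ofLp 2 _)
  | succ k ih =>
    intro j
    have : Continuous (fun y : Input n => (N.W k).mulVec (N.hid y k) j + N.b k j) := by
      refine Continuous.add ?_ continuous_const
      show Continuous fun y : Input n => ∑ i, N.W k j i * N.hid y k i
      exact continuous_finset_sum _ fun i _ => continuous_const.mul (ih i)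
    exact this.max continuous_const

lemma continuous_preact (k : ℕ) (j : Fin (n (k+1))) :
    Continuous (fun y : Input n => N.preact y k j) := by
  refine Continuous.add ?_ continuous_const
  show Continuous fun y : Input n => ∑ i, N.W k j i * N.hid y k i
  exact continuous_finset_sum _ fun i _ => continuous_const.mul (N.continuous_hid k i)

lemma continuous_fnet (h1 : n (L+1) = 1) : Continuous (fun y : Input n => N.fnet h1 y) :=
  N.continuous_preact L _

lemma shid_succ (s : Pat n) (y : Input n) (k : ℕ) (j : Fin (n (k+1))) :
    N.shid s y (k+1) j = s k j * N.spreact s y k j := rfl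

lemma hid_succ (y : Input n) (k : ℕ) (j : Fin (n (k+1))) :
    N.hid y (k+1) j = max (N.preact y k j) 0 := rfl

lemma shid_eq_hid {s : Pat n} {y : Input n} (hs : s ∈ N.SC y) :
    ∀ k, k ≤ L → ∀ i, N.shid s y k i = N.hid y k i := by
  intro k
  induction k with
  | zero => intro _ i; rfl
  | succ k ih =>
    intro hk j
    have hkL : k < L := hk
    have hhd : N.shid s y k = N.hid y k := funext (ih (Nat.le_of_succ_le hk))
    rw [shid_succ, hid_succ]
    have hsp : N.spreact s y k j = N.preact y k j := by
      unfold spreact preact; rw [hhd]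
    rw [hsp]
    exact (relu_eq_of_compat (hs.1 k hkL j) (hs.2 k hkL j)).symm

lemma spreact_eq_preact {s : Pat n} {y : Input n} (hs : s ∈ N.SC y) {k : ℕ} (hk : k ≤ L)
    (j : Fin (n (k+1))) : N.spreact s y k j = N.preact y k j := by
  unfold spreact preact
  rw [funext (N.shid_eq_hid hs k hk)]

lemma fnet_eq_sfnet (h1 : n (L+1) = 1) {s : Pat n} {y : Input n} (hs : s ∈ N.SC y) :
    N.fnet h1 y = N.sfnet h1 s y :=
  (N.spreact_eq_preact hs le_rfl _).symm

/-- The canonical activation pattern of a point. -/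
def can (y : Input n) : Pat n := fun k j => if 0 < N.preact y k j then 1 else 0

lemma can_isPattern (y : Input n) : IsPattern L (N.can y) := by
  intro k _ j; unfold can; split <;> simp

lemma can_mem_SC (y : Input n) : N.can y ∈ N.SC y := by
  refine ⟨N.can_isPattern y, fun k hk j => ?_⟩
  show Real.sign (N.preact y k j) * (N.can y k j - 1/2) ≥ 0
  unfold can
  rcases lt_trichotomy (N.preact y k j) 0 with h|h|h
  · rw [Real.sign_of_neg h, if_neg (by linarith)]; norm_num
  · rw [h, Real.sign_zero, zero_mul]
  · rw [Real.sign_of_pos h, if_pos h]; norm_num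

lemma spreact_sub (s : Pat n) (y x : Input n) :
    ∀ (k : ℕ) (j : Fin (n (k+1))), N.spreact s y k j - N.spreact s x k j
      = (N.sMat s k).mulVec (fun i => y i - x i) j := by
  intro k
  induction k with
  | zero =>
    intro j
    show ((N.W 0).mulVec (fun i => y i) j + N.b 0 j)
        - ((N.W 0).mulVec (fun i => x i) j + N.b 0 j) = (N.W 0).mulVec (fun i => y i - x i) j
    have : (fun i => y i - x i) = (fun i => y i) - (fun i => x i) := rfl
    rw [this, Matrix.mulVec_sub]
    simp [Pi.sub_apply]
  | succ k ih =>
    intro j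
    have hdiff : (N.shid s y (k+1)) - (N.shid s x (k+1))
        = (Matrix.diagonal (s k)).mulVec ((N.sMat s k).mulVec (fun i => y i - x i)) := by
      funext i
      rw [Pi.sub_apply, shid_succ, shid_succ, Matrix.mulVec_diagonal, ← mul_sub, ih i]
    have : N.spreact s y (k+1) j - N.spreact s x (k+1) j
        = (N.W (k+1)).mulVec ((N.shid s y (k+1)) - (N.shid s x (k+1))) j := by
      unfold spreact
      rw [Matrix.mulVec_sub]
      simp [Pi.sub_apply]
    rw [this, hdiff, Matrix.mulVec_mulVec, Matrix.mulVec_mulVec]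
    show _ = (N.sMat s (k+1)).mulVec _ j
    rfl

lemma inner_nvec (s : Pat n) (p : Idx n) (v : Input n) :
    ⟪N.nvec s p, v⟫ = (N.sMat s p.1).mulVec (fun i => v i) p.2 := by
  simp only [PiLp.inner_apply, RCLike.inner_apply, conj_trivial]
  show ∑ i, v i * N.nvec s p i = ∑ i, N.sMat s p.1 p.2 i * v i
  exact Finset.sum_congr rfl fun i _ => mul_comm _ _

lemma spreact_sub_inner (s : Pat n) (y x : Input n) (p : Idx n) :
    N.spreact s y p.1 p.2 - N.spreact s x p.1 p.2 = ⟪N.nvec s p, y - x⟫ := by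
  rw [inner_nvec]
  have : (fun i => (y - x) i) = fun i => y i - x i := rfl
  rw [this, N.spreact_sub s y x p.1 p.2]

lemma spreact_add_smul (s : Pat n) (x w : Input n) (t : ℝ) (k : ℕ) (j : Fin (n (k+1))) :
    N.spreact s (x + t • w) k j = N.spreact s x k j + t * ⟪N.nvec s ⟨k, j⟩, w⟫ := by
  have h := N.spreact_sub_inner s (x + t • w) x ⟨k, j⟩
  have h2 : x + t • w - x = t • w := by abel
  rw [h2, real_inner_smul_right] at h
  show N.spreact s (x + t • w) ((⟨k,j⟩ : Idx n).1) ((⟨k,j⟩ : Idx n).2) = _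
  linarith [h]

lemma preact_eq_zero_of_critical {x : Input n} {p : Idx n} (hc : N.Critical x p) :
    N.preact x p.1 p.2 = 0 := by
  by_contra h
  have hsgn : ∀ᶠ y in 𝓝 x, Real.sign (N.preact y p.1 p.2) = Real.sign (N.preact x p.1 p.2) := by
    rcases lt_or_gt_of_ne h with hneg | hpos
    · have : ∀ᶠ y in 𝓝 x, N.preact y p.1 p.2 < 0 :=
        ((N.continuous_preact p.1 p.2).tendsto x).eventually_lt_const hneg
      exact this.mono fun y hy => by rw [Real.sign_of_neg hy, Real.sign_of_neg hneg]
    · have : ∀ᶠ y in 𝓝 x, 0 < N.preact y p.1 p.2 :=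
        ((N.continuous_preact p.1 p.2).tendsto x).eventually_const_lt hpos
      exact this.mono fun y hy => by rw [Real.sign_of_pos hy, Real.sign_of_pos hpos]
  rw [Metric.eventually_nhds_iff] at hsgn
  obtain ⟨ε, hε, hb⟩ := hsgn
  obtain ⟨y, z, hy, hz, hne⟩ := hc.2 ε hε
  exact hne ((hb hy).trans (hb hz).symm)

lemma noncrit_stable {x : Input n} {q : Idx n} (hq : q.1 < L) (h : ¬ N.Critical x q) :
    ∃ ε > 0, ∀ y, dist y x < ε → N.Hpat y q.1 q.2 = N.Hpat x q.1 q.2 := by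
  unfold Critical at h
  push_neg at h
  obtain ⟨ε, hε, hy⟩ := h hq
  exact ⟨ε, hε, fun y hd => hy y x hd (by simpa using hε)⟩

lemma eventually_all_idx {α : Type*} {l : Filter α} {P : α → Idx n → Prop}
    (h : ∀ q : Idx n, q.1 < L → ∀ᶠ t in l, P t q) :
    ∀ᶠ t in l, ∀ q : Idx n, q.1 < L → P t q := by
  have h2 : ∀ᶠ t in l, ∀ k : Fin L, ∀ j : Fin (n (k.1+1)), P t ⟨k.1, j⟩ := by
    rw [eventually_all]
    intro k
    rw [eventually_all]
    intro j
    exact h ⟨k.1, j⟩ k.2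
  exact h2.mono fun t ht q hq => ht ⟨q.1, hq⟩ q.2

lemma core {x : Input n} {s : Pat n} (hs : s ∈ N.SC x) (w : Input n) {lf : Filter ℝ}
    (hball : Filter.Tendsto (fun t => x + t • w) lf (𝓝 x))
    (hcrit : ∀ᶠ t in lf, ∀ q : Idx n, N.Critical x q →
      (s q.1 q.2 = 1 → 0 ≤ t * ⟪N.nvec s q, w⟫) ∧ (s q.1 q.2 = 0 → t * ⟪N.nvec s q, w⟫ ≤ 0)) :
    ∀ k, k ≤ L → ∀ᶠ t in lf, ∀ i, N.hid (x + t • w) k i = N.shid s (x + t • w) k i := by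
  intro k
  induction k with
  | zero => intro _; exact Filter.Eventually.of_forall fun t i => rfl
  | succ k ih =>
    intro hk
    have hkL : k < L := hk
    have ihk := ih (Nat.le_of_succ_le hk)
    rw [eventually_all]
    intro j
    have hspv : ∀ t : ℝ, N.hid (x + t • w) k = N.shid s (x + t • w) k →
        N.preact (x + t • w) k j = N.spreact s (x + t • w) k j := by
      intro t ht; unfold preact spreact; rw [ht]
    by_cases hq : N.Critical x ⟨k, j⟩
    · have hz : N.preact x k j = 0 := N.preact_eq_zero_of_critical hq
      filter_upwards [ihk, hcrit] with t ht hc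
      have hpre : N.preact (x + t • w) k j = t * ⟪N.nvec s ⟨k,j⟩, w⟫ := by
        rw [hspv t (funext ht), N.spreact_add_smul,
          N.spreact_eq_preact hs (le_of_lt hkL) j, hz, zero_add]
      have hsp2 : N.spreact s (x + t • w) k j = t * ⟪N.nvec s ⟨k,j⟩, w⟫ := by
        rw [← hspv t (funext ht)]; exact hpre
      rw [hid_succ, hpre, shid_succ, hsp2]
      rcases hs.1 k hkL j with h0 | h1
      · rw [h0, max_eq_right ((hc ⟨k,j⟩ hq).2 h0), zero_mul]
      · rw [h1, max_eq_left ((hc ⟨k,j⟩ hq).1 h1), one_mul]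
    · obtain ⟨ε, hε, hst⟩ := N.noncrit_stable hkL hq
      have hballq : ∀ᶠ t in lf, (x + t • w) ∈ ball x ε := hball (ball_mem_nhds x hε)
      filter_upwards [ihk, hballq] with t ht hb
      have hpre := hspv t (funext ht)
      rw [hid_succ, shid_succ, ← hpre]
      refine relu_eq_of_compat (hs.1 k hkL j) ?_
      have hsgn : Real.sign (N.preact (x + t • w) k j) = Real.sign (N.preact x k j) :=
        hst _ (mem_ball.mp hb)
      rw [hsgn]
      exact hs.2 k hkL j

lemma tendsto_ray (x w : Input n) {lf : Filter ℝ} (hlf : lf ≤ 𝓝 0) :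
    Filter.Tendsto (fun t : ℝ => x + t • w) lf (𝓝 x) := by
  have hc : Continuous (fun t : ℝ => x + t • w) :=
    continuous_const.add (continuous_id.smul continuous_const)
  have := (hc.tendsto 0).mono_left hlf
  simpa using this

lemma fnet_ray (h1 : n (L+1) = 1) {x : Input n} {s : Pat n} (hs : s ∈ N.SC x) {w : Input n}
    (hax : ∀ q : Idx n, N.Critical x q → 0 ≤ ⟪w, N.onvec s q⟫) :
    ∀ᶠ t in 𝓝[>] (0:ℝ), N.fnet h1 (x + t • w) = N.fnet h1 x + t * ⟪w, N.grad h1 s⟫ := by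
  have hball := tendsto_ray x w (nhdsWithin_le_nhds (s := Set.Ioi (0:ℝ)))
  have hcrit : ∀ᶠ t in 𝓝[>] (0:ℝ), ∀ q : Idx n, N.Critical x q →
      (s q.1 q.2 = 1 → 0 ≤ t * ⟪N.nvec s q, w⟫) ∧ (s q.1 q.2 = 0 → t * ⟪N.nvec s q, w⟫ ≤ 0) := by
    filter_upwards [self_mem_nhdsWithin] with t ht q hq
    have htpos : (0:ℝ) ≤ t := le_of_lt ht
    constructor
    · intro h1'
      have : 0 ≤ ⟪w, N.nvec s q⟫ := by have := hax q hq; rwa [onvec, if_pos h1'] at this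
      rw [real_inner_comm] at this
      exact mul_nonneg htpos this
    · intro h0
      have : 0 ≤ ⟪w, -N.nvec s q⟫ := by
        have := hax q hq; rwa [onvec, if_neg (by rw [h0]; norm_num)] at this
      rw [inner_neg_right] at this
      have h2 : ⟪N.nvec s q, w⟫ ≤ 0 := by rw [real_inner_comm]; linarith
      exact mul_nonpos_of_nonneg_of_nonpos htpos h2
  filter_upwards [N.core hs w hball hcrit L le_rfl] with t ht
  have hpre : N.preact (x + t • w) L (Fin.cast h1.symm 0) = N.spreact s (x + t • w) L (Fin.cast h1.symm 0) := by
    unfold preact spreact; rw [funext ht]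
  show N.preact (x + t • w) L (Fin.cast h1.symm 0) = _
  rw [hpre, N.spreact_add_smul, N.spreact_eq_preact hs le_rfl]
  have : ⟪N.nvec s ⟨L, Fin.cast h1.symm 0⟩, w⟫ = ⟪w, N.grad h1 s⟫ := real_inner_comm _ _
  rw [this]
  rfl

lemma grad_eq (h1 : n (L+1) = 1) {x : Input n} {s s' : Pat n}
    (hs : s ∈ N.SC x) (hs' : s' ∈ N.SC x) {w : Input n}
    (hax : ∀ q : Idx n, N.Critical x q → 0 ≤ ⟪w, N.onvec s q⟫)
    (hax' : ∀ q : Idx n, N.Critical x q → 0 ≤ ⟪w, N.onvec s' q⟫) :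
    ⟪w, N.grad h1 s⟫ = ⟪w, N.grad h1 s'⟫ := by
  obtain ⟨t, h1', h2', ht⟩ :=
    ((N.fnet_ray h1 hs hax).and ((N.fnet_ray h1 hs' hax').and self_mem_nhdsWithin)).exists
  have htpos : (0:ℝ) < t := ht
  have := h1'.symm.trans h2'
  have h3 : t * ⟪w, N.grad h1 s⟫ = t * ⟪w, N.grad h1 s'⟫ := by linarith
  exact mul_left_cancel₀ (ne_of_gt htpos) h3

lemma eq_zero_of_perp {x : Input n} (hvx : N.IsVertex x) {s : Pat n} (hs : s ∈ N.SC x)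
    {v : Input n} (hperp : ∀ q : Idx n, N.Critical x q → ⟪N.nvec s q, v⟫ = 0) : v = 0 := by
  have hball := tendsto_ray x v (le_refl (𝓝 (0:ℝ)))
  have hcrit : ∀ᶠ t in 𝓝 (0:ℝ), ∀ q : Idx n, N.Critical x q →
      (s q.1 q.2 = 1 → 0 ≤ t * ⟪N.nvec s q, v⟫) ∧ (s q.1 q.2 = 0 → t * ⟪N.nvec s q, v⟫ ≤ 0) :=
    Filter.Eventually.of_forall fun t q hq => by
      rw [hperp q hq, mul_zero]; exact ⟨fun _ => le_refl 0, fun _ => le_refl 0⟩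
  have hcore := N.core hs v hball hcrit
  have hH : ∀ᶠ t in 𝓝 (0:ℝ), ∀ q : Idx n, q.1 < L →
      N.Hpat (x + t • v) q.1 q.2 = N.Hpat x q.1 q.2 := by
    apply eventually_all_idx
    intro q hq
    by_cases hcq : N.Critical x q
    · filter_upwards [hcore q.1 (le_of_lt hq)] with t ht
      have hpre : N.preact (x + t • v) q.1 q.2 = N.preact x q.1 q.2 := by
        have h1' : N.preact (x + t • v) q.1 q.2 = N.spreact s (x + t • v) q.1 q.2 := by
          unfold preact spreact; rw [funext ht]
        rw [h1', N.spreact_add_smul, hperp q hcq, mul_zero, add_zero,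
          N.spreact_eq_preact hs (le_of_lt hq)]
      show Real.sign _ = Real.sign _
      rw [hpre]
    · obtain ⟨ε, hε, hst⟩ := N.noncrit_stable hq hcq
      filter_upwards [hball (ball_mem_nhds x hε)] with t hb
      exact hst _ (mem_ball.mp hb)
  rw [Metric.eventually_nhds_iff] at hH
  obtain ⟨ε, hε, h⟩ := hH
  have hker : v ∈ N.KerC x := by
    refine ⟨ε, hε, fun t ht p hp => ?_⟩
    exact h (show dist t 0 < ε by simpa [Real.dist_eq] using ht) p hp
  have hbot : Submodule.span ℝ (N.KerC x) = ⊥ := by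
    have h := hvx
    unfold IsVertex dfC at h
    exact (Submodule.finrank_eq_zero (R := ℝ) (S := Submodule.span ℝ (N.KerC x))).mp h
  have := Submodule.subset_span (R := ℝ) hker
  rw [hbot] at this
  simpa using this

lemma sCritical_of (x : Input n) {s : Pat n} {p : Idx n} (hL : p.1 < L)
    (h0 : N.spreact s x p.1 p.2 = 0) (hv : N.nvec s p ≠ 0) : N.sCritical s x p := by
  refine ⟨hL, fun ε hε => ?_⟩
  set v : Input n := N.nvec s p with hvdef
  have hvn : 0 < ‖v‖ := norm_pos_iff.mpr hv
  set c : ℝ := ε / (2 * ‖v‖) with hcdef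
  have hc : 0 < c := by positivity
  have hdist : ∀ t : ℝ, dist (x + t • v) x = |t| * ‖v‖ := by
    intro t; rw [dist_eq_norm, add_sub_cancel_left, norm_smul, Real.norm_eq_abs]
  have hcv : c * ‖v‖ < ε := by
    rw [hcdef]; rw [div_mul_eq_mul_div]
    rw [div_lt_iff₀ (by positivity)]
    nlinarith
  have hinner : (0:ℝ) < ⟪v, v⟫ := by rw [real_inner_self_eq_norm_sq]; positivity
  have hsp : ∀ t : ℝ, N.spreact s (x + t • v) p.1 p.2 = t * ⟪v, v⟫ := by
    intro t
    have := N.spreact_add_smul s x v t p.1 p.2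
    simp only [Sigma.eta] at this
    rw [this, h0, zero_add]
  refine ⟨x + c • v, x + (-c) • v, ?_, ?_, ?_⟩
  · rw [hdist, abs_of_pos hc]; exact hcv
  · rw [hdist, abs_neg, abs_of_pos hc]; exact hcv
  · show Real.sign (N.spreact s (x + c • v) p.1 p.2) ≠ Real.sign (N.spreact s (x + (-c) • v) p.1 p.2)
    rw [hsp, hsp, Real.sign_of_pos (by positivity), Real.sign_of_neg (by nlinarith)]
    norm_num

set_option maxHeartbeats 1000000 in
lemma exists_axes {x : Input n} (hreg : N.RegularPoint x) (hvx : N.IsVertex x)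
    {s : Pat n} (hs : s ∈ N.SC x) :
    ∃ (T : Finset (Idx n)) (a : Idx n → Input n),
      (∀ q ∈ T, N.Critical x q) ∧ (∀ q ∈ T, N.IsAxis x s q (a q)) ∧
      (∀ v : Input n, v = ∑ q ∈ T, ⟪N.onvec s q, v⟫ • a q) := by
  classical
  let Sset : Set (Idx n) := {q | N.Critical x q ∧ N.nvec s q ≠ 0}
  have hfinset : Set.Finite {q : Idx n | q.1 < L} := by
    have hsub : {q : Idx n | q.1 < L} ⊆ ⋃ k ∈ Finset.range L, Sigma.mk k '' Set.univ := by
      intro q hq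
      simp only [Set.mem_iUnion]
      exact ⟨q.1, by simpa using hq, q.2, Set.mem_univ _, rfl⟩
    exact Set.Finite.subset
      (Set.Finite.biUnion (Finset.finite_toSet _) (fun k _ => Set.finite_univ.image _)) hsub
  have hfinsub : Set.Finite Sset := Set.Finite.subset hfinset (fun q hq => hq.1.1)
  have hfin : Finite Sset := hfinsub.to_subtype
  haveI hFT : Fintype Sset := Fintype.ofFinite _
  -- the subjective critical indices
  have hscrit : ∀ q : Sset, N.sCritical s x q.1 := by
    intro q
    refine N.sCritical_of x q.2.1.1 ?_ q.2.2
    rw [N.spreact_eq_preact hs (le_of_lt q.2.1.1)]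
    exact N.preact_eq_zero_of_critical q.2.1
  -- linear independence of the (oriented) normal vectors
  have hii : LinearIndependent ℝ (fun q : Sset => N.nvec s q.1) := by
    have hli := hreg s hs
    have hinj : Function.Injective
        (fun q : Sset => (⟨q.1, hscrit q⟩ : {p : Idx n // N.sCritical s x p})) := by
      intro q r h
      apply Subtype.ext
      simpa using congrArg Subtype.val h
    have := hli.comp (fun q : Sset => (⟨q.1, hscrit q⟩ : {p : Idx n // N.sCritical s x p})) hinj
    exact this
  have hiu : LinearIndependent ℝ (fun q : Sset => N.onvec s q.1) := by
    have h2 : (fun q : Sset => N.onvec s q.1)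
        = ((fun q : Sset => if s q.1.1 q.1.2 = 1 then (1:ℝˣ) else -1) • (fun q : Sset => N.nvec s q.1)) := by
      funext q
      simp only [Pi.smul_apply', onvec]
      split
      · simp
      · simp
    rw [h2]
    exact hii.units_smul _
  -- the linear map v ↦ (⟪u q, v⟫)
  let Φ : Input n →ₗ[ℝ] (Sset → ℝ) :=
    { toFun := fun v q => ⟪N.onvec s q.1, v⟫
      map_add' := fun u v => by funext q; simp [inner_add_right]
      map_smul' := fun c v => by funext q; simp [inner_smul_right] }
  have hΦdef : ∀ (v : Input n) (q : Sset), Φ v q = ⟪N.onvec s q.1, v⟫ := fun _ _ => rfl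
  have hΦinj : Function.Injective Φ := by
    intro u v huv
    have hz : u - v = 0 := by
      refine N.eq_zero_of_perp hvx hs (v := u - v) ?_
      intro q hq
      by_cases hnv : N.nvec s q = 0
      · rw [hnv, inner_zero_left]
      · have hqS : q ∈ Sset := ⟨hq, hnv⟩
        have h3 : ⟪N.onvec s q, u - v⟫ = 0 := by
          have h4 := congrFun huv ⟨q, hqS⟩
          rw [hΦdef, hΦdef] at h4
          rw [inner_sub_right, h4, sub_self]
        unfold onvec at h3
        by_cases h1' : s q.1 q.2 = 1
        · rwa [if_pos h1'] at h3
        · rw [if_neg h1', inner_neg_left, neg_eq_zero] at h3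
          exact h3
    rw [sub_eq_zero] at hz
    exact hz
  have hdim : Module.finrank ℝ (Input n) = Module.finrank ℝ (Sset → ℝ) := by
    have hc1 : Fintype.card Sset ≤ Module.finrank ℝ (Input n) :=
      hiu.fintype_card_le_finrank
    have hc2 := LinearMap.finrank_le_finrank_of_injective hΦinj
    rw [Module.finrank_pi] at hc2 ⊢
    exact le_antisymm hc2 hc1
  let E := Φ.linearEquivOfInjective hΦinj hdim
  have hEapp : ∀ v, E v = Φ v := fun v => Φ.linearEquivOfInjective_apply hΦinj hdim v
  let a0 : Sset → Input n := fun i => E.symm (Pi.single (M := fun _ : Sset => ℝ) i 1)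
  have hfa : ∀ i : Sset, Φ (a0 i) = Pi.single (M := fun _ : Sset => ℝ) i 1 := by
    intro i
    rw [← hEapp]
    exact E.apply_symm_apply _
  have ha : ∀ (i q : Sset), ⟪N.onvec s q.1, a0 i⟫ = Pi.single (M := fun _ : Sset => ℝ) i 1 q := by
    intro i q
    rw [← hΦdef, hfa]
  let a : Idx n → Input n := fun q => if h : q ∈ Sset then a0 ⟨q, h⟩ else 0
  have haS : ∀ i : Sset, a i.1 = a0 i := by
    intro i
    simp only [a, dif_pos i.2]
  have haxis : ∀ i : Sset, N.IsAxis x s i.1 (a0 i) := by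
    intro i q hq
    by_cases hnv : N.nvec s q = 0
    · have hoz : N.onvec s q = 0 := by unfold onvec; split <;> simp [hnv]
      rw [hoz, inner_zero_right, if_neg]
      intro he
      exact i.2.2 (by rw [he]; exact hnv)
    · have hqS : q ∈ Sset := ⟨hq, hnv⟩
      have h5 := ha i ⟨q, hqS⟩
      rw [real_inner_comm] at h5
      rw [h5, Pi.single_apply]
      by_cases hri : (⟨q, hqS⟩ : Sset) = i
      · rw [if_pos hri, if_pos (by rw [← hri])]
      · rw [if_neg hri, if_neg (fun he => hri (Subtype.ext he.symm))]
  refine ⟨hfinsub.toFinset, a, ?_, ?_, ?_⟩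
  · intro q hq
    exact (hfinsub.mem_toFinset.mp hq).1
  · intro q hq
    have hqS : q ∈ Sset := hfinsub.mem_toFinset.mp hq
    have := haxis ⟨q, hqS⟩
    rwa [← haS ⟨q, hqS⟩] at this
  · intro v
    have hsum : ∑ q ∈ hfinsub.toFinset, ⟪N.onvec s q, v⟫ • a q
        = ∑ i : Sset, ⟪N.onvec s i.1, v⟫ • a0 i := by
      refine (Finset.sum_bij (fun (i : Sset) _ => i.1) ?_ ?_ ?_ ?_).symm
      · intro i _
        exact hfinsub.mem_toFinset.mpr i.2
      · intro i _ j _ h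
        exact Subtype.ext h
      · intro q hq
        exact ⟨⟨q, hfinsub.mem_toFinset.mp hq⟩, Finset.mem_univ _, rfl⟩
      · intro i _
        rw [haS i]
    rw [hsum]
    -- injectivity argument
    apply hΦinj
    funext r
    rw [map_sum]
    simp only [map_smul]
    rw [Finset.sum_apply]
    simp only [hfa, Pi.smul_apply, Pi.single_apply, smul_eq_mul, mul_ite, mul_one, mul_zero]
    rw [Finset.sum_ite_eq Finset.univ r (fun i => ⟪N.onvec s i.1, v⟫)]
    rw [if_pos (Finset.mem_univ r), hΦdef]

lemma fnet_sub (h1 : n (L+1) = 1) {x y : Input n} {s : Pat n}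
    (hsx : s ∈ N.SC x) (hsy : s ∈ N.SC y) :
    N.fnet h1 y - N.fnet h1 x = ⟪N.grad h1 s, y - x⟫ := by
  rw [show N.fnet h1 y = N.spreact s y L (Fin.cast h1.symm 0) from
        (N.spreact_eq_preact hsy le_rfl _).symm,
      show N.fnet h1 x = N.spreact s x L (Fin.cast h1.symm 0) from
        (N.spreact_eq_preact hsx le_rfl _).symm]
  exact N.spreact_sub_inner s y x ⟨L, Fin.cast h1.symm 0⟩

lemma can_mem_SC_near (x : Input n) : ∀ᶠ y in 𝓝 x, N.can y ∈ N.SC x := by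
  have hev : ∀ᶠ y in 𝓝 x, ∀ q : Idx n, q.1 < L →
      ((0 < N.preact x q.1 q.2 → 0 < N.preact y q.1 q.2) ∧
       (N.preact x q.1 q.2 < 0 → N.preact y q.1 q.2 < 0)) := by
    apply eventually_all_idx
    intro q _
    rcases lt_trichotomy (N.preact x q.1 q.2) 0 with h|h|h
    · have h2 : ∀ᶠ y in 𝓝 x, N.preact y q.1 q.2 < 0 :=
        ((N.continuous_preact q.1 q.2).tendsto x).eventually_lt_const h
      exact h2.mono fun y hy => ⟨fun hpos => absurd hpos (by linarith), fun _ => hy⟩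
    · exact Filter.Eventually.of_forall fun y =>
        ⟨fun hpos => by rw [h] at hpos; exact absurd hpos (lt_irrefl 0),
         fun hneg => by rw [h] at hneg; exact absurd hneg (lt_irrefl 0)⟩
    · have h2 : ∀ᶠ y in 𝓝 x, 0 < N.preact y q.1 q.2 :=
        ((N.continuous_preact q.1 q.2).tendsto x).eventually_const_lt h
      exact h2.mono fun y hy => ⟨fun _ => hy, fun hneg => absurd hneg (by linarith)⟩
  filter_upwards [hev] with y hy
  refine ⟨N.can_isPattern y, fun k hk j => ?_⟩
  show Real.sign (N.preact x k j) * (N.can y k j - 1/2) ≥ 0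
  unfold can
  rcases lt_trichotomy (N.preact x k j) 0 with h|h|h
  · have h3 := (hy ⟨k,j⟩ hk).2 h
    rw [Real.sign_of_neg h, if_neg (not_lt.mpr h3.le)]
    norm_num
  · rw [h, Real.sign_zero, zero_mul]
  · have h3 := (hy ⟨k,j⟩ hk).1 h
    rw [Real.sign_of_pos h, if_pos h3]
    norm_num

lemma can_inner_nonneg (x y : Input n) (hsx : N.can y ∈ N.SC x) {q : Idx n}
    (hq : N.Critical x q) : 0 ≤ ⟪N.onvec (N.can y) q, y - x⟫ := by
  set s := N.can y with hsdef
  have h := N.spreact_sub_inner s y x q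
  rw [N.spreact_eq_preact (N.can_mem_SC y) (le_of_lt hq.1),
      N.spreact_eq_preact hsx (le_of_lt hq.1),
      N.preact_eq_zero_of_critical hq, sub_zero] at h
  have h1' : ⟪N.nvec s q, y - x⟫ = N.preact y q.1 q.2 := h.symm
  unfold onvec
  by_cases hcase : s q.1 q.2 = 1
  · rw [if_pos hcase, h1']
    by_contra hcon
    push_neg at hcon
    have h4 : s q.1 q.2 = 0 := by
      rw [hsdef]; show (if 0 < N.preact y q.1 q.2 then (1:ℝ) else 0) = 0
      rw [if_neg (by linarith)]
    rw [h4] at hcase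
    norm_num at hcase
  · rw [if_neg hcase, inner_neg_left, h1']
    have h5 : ¬ 0 < N.preact y q.1 q.2 := fun hpos => hcase (by
      rw [hsdef]; show (if 0 < N.preact y q.1 q.2 then (1:ℝ) else 0) = 1
      rw [if_pos hpos])
    exact neg_nonneg.mpr (not_lt.mp h5)

lemma local_min_of_axes (h1 : n (L+1) = 1) {x : Input n} (hreg : N.RegularPoint x)
    (hvx : N.IsVertex x)
    (hax : ∀ w ∈ N.RegionSepAxes x, ∃ s ∈ N.SC x, ∃ p : Idx n,
      N.sCritical s x p ∧ N.IsAxis x s p w ∧ ⟪w, N.grad h1 s⟫ ≥ 0) :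
    ∀ᶠ y in 𝓝 x, N.fnet h1 x ≤ N.fnet h1 y := by
  filter_upwards [N.can_mem_SC_near x] with y hySC
  obtain ⟨T, a, hTcrit, hTaxis, hdecomp⟩ := N.exists_axes hreg hvx hySC
  set s := N.can y with hsdef
  have key : 0 ≤ ⟪N.grad h1 s, y - x⟫ := by
    have hde := hdecomp (y - x)
    have heq : ⟪N.grad h1 s, y - x⟫
        = ∑ q ∈ T, ⟪N.onvec s q, y - x⟫ * ⟪N.grad h1 s, a q⟫ := by
      conv_lhs => rw [hde]
      rw [inner_sum]
      refine Finset.sum_congr rfl fun q _ => ?_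
      rw [real_inner_smul_right]
    rw [heq]
    apply Finset.sum_nonneg
    intro q hqT
    have hq := hTcrit q hqT
    have ht := N.can_inner_nonneg x y hySC hq
    have haxq := hTaxis q hqT
    have hwRSA : a q ∈ N.RegionSepAxes x := ⟨s, hySC, q, hq, haxq⟩
    obtain ⟨s', hs', p', hp'c, haxis', hge⟩ := hax _ hwRSA
    have h0 : ∀ r, N.Critical x r → 0 ≤ ⟪a q, N.onvec s r⟫ := fun r hr => by
      rw [haxq r hr]; split <;> norm_num
    have h0' : ∀ r, N.Critical x r → 0 ≤ ⟪a q, N.onvec s' r⟫ := fun r hr => by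
      rw [haxis' r hr]; split <;> norm_num
    have hgeq := N.grad_eq h1 hySC hs' h0 h0'
    have hgq : 0 ≤ ⟪a q, N.grad h1 s⟫ := by rw [hgeq]; exact hge
    exact mul_nonneg ht (by rw [real_inner_comm]; exact hgq)
  have hfy := N.fnet_sub h1 hySC (N.can_mem_SC y)
  linarith

end Net

/-- Proposition 1: a regular vertex `x` is a local minimum of `f`, i.e.
`∃ ε > 0, f(x) = inf {f(y) : y ∈ B_ε(x)}`, if and only if every region separating axis
`a ∈ 𝒜(x)` can be written as `a = ã_{x,s,l,j}` for some `s ∈ S^C(x)` and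
`(l,j) ∈ C̃_s(x)` with `⟨ã_{x,s,l,j}, ∇_s⟩ ≥ 0`. -/
theorem statement16 {L : ℕ} {n : ℕ → ℕ} (N : Net L n) (h1 : n (L+1) = 1) (x : Input n)
    (hreg : N.RegularPoint x) (hvx : N.IsVertex x) :
    (∃ ε > 0, N.fnet h1 x = sInf ((fun y => N.fnet h1 y) '' ball x ε)) ↔
      ∀ w ∈ N.RegionSepAxes x,
        ∃ s ∈ N.SC x, ∃ p : Idx n,
          N.sCritical s x p ∧ N.IsAxis x s p w ∧ ⟪w, N.grad h1 s⟫ ≥ 0 := by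
  constructor
  · rintro ⟨ε, hε, hinf⟩ w hw
    obtain ⟨s, hsSC, p, hpc, haxis⟩ := hw
    have honz : ⟪w, N.onvec s p⟫ = 1 := by
      have := haxis p hpc; rwa [if_pos rfl] at this
    have hnv : N.nvec s p ≠ 0 := by
      intro h0
      have hoz : N.onvec s p = 0 := by unfold Net.onvec; split <;> simp [h0]
      rw [hoz, inner_zero_right] at honz
      norm_num at honz
    have h0 : N.spreact s x p.1 p.2 = 0 := by
      rw [N.spreact_eq_preact hsSC (le_of_lt hpc.1)]
      exact N.preact_eq_zero_of_critical hpc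
    refine ⟨s, hsSC, p, N.sCritical_of x hpc.1 h0 hnv, haxis, ?_⟩
    have hbdd : BddBelow ((fun y => N.fnet h1 y) '' ball x ε) := by
      have hcpt := (isCompact_closedBall x ε).bddBelow_image
        ((N.continuous_fnet h1).continuousOn)
      exact hcpt.mono (Set.image_mono ball_subset_closedBall)
    have hlb : ∀ y ∈ ball x ε, N.fnet h1 x ≤ N.fnet h1 y := by
      intro y hy
      rw [hinf]
      exact csInf_le hbdd ⟨y, hy, rfl⟩
    have hray := N.fnet_ray h1 hsSC (w := w)
      (fun q hq => by rw [haxis q hq]; split <;> norm_num)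
    have hballev : ∀ᶠ t in 𝓝[>] (0:ℝ), x + t • w ∈ ball x ε :=
      (Net.tendsto_ray x w nhdsWithin_le_nhds) (ball_mem_nhds x hε)
    obtain ⟨t, htf, htb, htpos⟩ := (hray.and (hballev.and self_mem_nhdsWithin)).exists
    have hle := hlb _ htb
    rw [htf] at hle
    have htp : (0:ℝ) < t := htpos
    by_contra hcon
    push_neg at hcon
    nlinarith
  · intro hax
    have hev := N.local_min_of_axes h1 hreg hvx hax
    rw [Metric.eventually_nhds_iff] at hev
    obtain ⟨ε, hε, h⟩ := hev
    refine ⟨ε, hε, ?_⟩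
    apply le_antisymm
    · refine le_csInf (Set.Nonempty.image _ ⟨x, mem_ball_self hε⟩) ?_
      rintro b ⟨y, hy, rfl⟩
      exact h (mem_ball.mp hy)
    · exact csInf_le ⟨N.fnet h1 x, by rintro b ⟨y, hy, rfl⟩; exact h (mem_ball.mp hy)⟩
        ⟨x, mem_ball_self hε, rfl⟩

end DRLP
end
end

section
/- For every x ∈ ℝ^{n_0} and every activation pattern s ∈ S, one has s ∈ S^C(x) if and only if Ã_s(x)_{lj}(s_{lj} − 0.5) ≥ 0 for all (l,j) ∈ I. -/
/-!
Formalization of the setting of "Deep ReLU Programming" (Hinz & van de Geer).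

A feed-forward ReLU network with `L` hidden layers and widths `n 0, …, n (L+1)`
(`n (L+1) = 1` for a real-valued network) is encoded by the structure `Net L n`
below, where `W k : Matrix (Fin (n (k+1))) (Fin (n k)) ℝ` and
`b k : Fin (n (k+1)) → ℝ` are the weight matrix and bias vector of layer `k+1`
(so the paper's `W_l, b_l` correspond to `W (l-1), b (l-1)` here).

A neuron `(l, j)` of the paper (layer `l ∈ {1, …, L}`, neuron `j`) is encoded as
the pair `⟨k, j⟩ : Idx n` with `k = l - 1`; membership in the index set `I`
corresponds to the condition `k < L`.
-/

noncomputable section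
open Metric Filter Topology
open scoped Classical RealInnerProductSpace BigOperators

namespace DRLP

private lemma sign_mul_nonneg (t c : ℝ) : Real.sign t * c ≥ 0 ↔ t * c ≥ 0 := by
  rcases lt_trichotomy t 0 with h | h | h
  · rw [Real.sign_of_neg h]
    constructor <;> intro hc <;> nlinarith
  · simp [h]
  · rw [Real.sign_of_pos h]
    constructor <;> intro hc <;> nlinarith

private lemma shid_eq {L : ℕ} {n : ℕ → ℕ} (N : Net L n) (x : Input n) (s : Pat n)
    (hS : IsPattern L s) :
    ∀ k, k ≤ L → (∀ k' < k, ∀ j, N.preact x k' j * (s k' j - 1/2) ≥ 0) →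
    N.shid s x k = N.hid x k := by
  intro k
  induction k with
  | zero => intro _ _; rfl
  | succ k ih =>
    intro hk h
    have hkL : k < L := Nat.lt_of_succ_le hk
    have heq := ih (le_of_lt hkL) (fun k' hk' j => h k' (Nat.lt_succ_of_lt hk') j)
    funext j
    show s k j * ((N.W k).mulVec (N.shid s x k) j + N.b k j)
        = max ((N.W k).mulVec (N.hid x k) j + N.b k j) 0
    rw [heq]
    have hpre := h k (Nat.lt_succ_self k) j
    unfold Net.preact at hpre
    rcases hS k hkL j with h0 | h1
    · rw [h0] at hpre ⊢
      have hle : (N.W k).mulVec (N.hid x k) j + N.b k j ≤ 0 := by nlinarith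
      rw [max_eq_right hle, zero_mul]
    · rw [h1] at hpre ⊢
      have hge : 0 ≤ (N.W k).mulVec (N.hid x k) j + N.b k j := by nlinarith
      rw [max_eq_left hge, one_mul]

/-- Lemma 13: for every `x` and every activation pattern `s ∈ S`, one has
`s ∈ S^C(x)` iff `Ã_s(x)_{lj}(s_{lj} - 0.5) ≥ 0` for all `(l,j) ∈ I`. -/
theorem statement18 {L : ℕ} {n : ℕ → ℕ} (N : Net L n) (x : Input n) (s : Pat n)
    (hS : IsPattern L s) :
    s ∈ N.SC x ↔
      ∀ p : Idx n, p.1 < L → N.spreact s x p.1 p.2 * (s p.1 p.2 - 1/2) ≥ 0 := by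
  constructor
  · rintro ⟨-, hcomp⟩ ⟨k, j⟩ hk
    have hpre : ∀ k' < L, ∀ j', N.preact x k' j' * (s k' j' - 1/2) ≥ 0 := by
      intro k' hk' j'
      exact (sign_mul_nonneg _ _).mp (hcomp k' hk' j')
    have heq : N.shid s x k = N.hid x k :=
      shid_eq N x s hS k (le_of_lt hk) (fun k' hk' j' => hpre k' (hk'.trans hk) j')
    show N.spreact s x k j * _ ≥ 0
    unfold Net.spreact
    rw [heq]
    exact hpre k hk j
  · intro h
    refine ⟨hS, ?_⟩
    intro k hk j
    -- strong induction: preact condition holds up to each layer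
    have key : ∀ k' ≤ L, ∀ k'' < k', ∀ j', N.preact x k'' j' * (s k'' j' - 1/2) ≥ 0 := by
      intro k'
      induction k' with
      | zero => intro _ k'' hk''; omega
      | succ m ih =>
        intro hm k'' hk'' j'
        rcases Nat.lt_succ_iff_lt_or_eq.mp hk'' with hlt | rfl
        · exact ih (le_of_lt (Nat.lt_of_succ_le hm)) k'' hlt j'
        · have hmL : k'' < L := Nat.lt_of_succ_le hm
          have heq : N.shid s x k'' = N.hid x k'' :=
            shid_eq N x s hS k'' (le_of_lt hmL)
              (fun a ha j'' => ih (le_of_lt hmL) a ha j'')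
          have := h ⟨k'', j'⟩ hmL
          unfold Net.spreact at this
          rw [heq] at this
          exact this
    exact (sign_mul_nonneg _ _).mpr (key (k + 1) hk k (Nat.lt_succ_self k) j)

end DRLP
end
end

section
/- For every x ∈ ℝ^{n_0} and every non-zero v ∈ ℝ^{n_0}, the one-sided directional derivative lim_{t↘0} (f(x+tv) − f(x))/t exists. Moreover, if ε* > 0 is such that H(y)_{lj} is constant for y ∈ B_{ε*}(x) and all (l,j) ∈ I \ C(x), if t* > 0 is small enough that x + t*v ∈ B_{ε*}(x), and if s ∈ S^C(x + t*v), then lim_{t↘0} (f(x+tv) − f(x))/t = lim_{t↘0} (f̃_s(x+tv) − f̃_s(x))/t = ⟨v, ∇_s⟩. -/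
/-!
Formalization of the setting of "Deep ReLU Programming" (Hinz & van de Geer).

A feed-forward ReLU network with `L` hidden layers and widths `n 0, …, n (L+1)`
(`n (L+1) = 1` for a real-valued network) is encoded by the structure `Net L n`
below, where `W k : Matrix (Fin (n (k+1))) (Fin (n k)) ℝ` and
`b k : Fin (n (k+1)) → ℝ` are the weight matrix and bias vector of layer `k+1`
(so the paper's `W_l, b_l` correspond to `W (l-1), b (l-1)` here).

A neuron `(l, j)` of the paper (layer `l ∈ {1, …, L}`, neuron `j`) is encoded as
the pair `⟨k, j⟩ : Idx n` with `k = l - 1`; membership in the index set `I`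
corresponds to the condition `k < L`.
-/

noncomputable section
open Metric Filter Topology
open scoped Classical RealInnerProductSpace BigOperators

namespace DRLP

namespace Aux

variable {L : ℕ} {n : ℕ → ℕ}

lemma sign_smul_pos {t γ : ℝ} (ht : 0 < t) : Real.sign (t * γ) = Real.sign γ := by
  rcases lt_trichotomy γ 0 with h | h | h
  · rw [Real.sign_of_neg h, Real.sign_of_neg (by nlinarith)]
  · simp [h]
  · rw [Real.sign_of_pos h, Real.sign_of_pos (by nlinarith)]

lemma sign_eq_one {r : ℝ} (h : Real.sign r = 1) : 0 < r := by
  rcases lt_trichotomy r 0 with h' | h' | h'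
  · rw [Real.sign_of_neg h'] at h; norm_num at h
  · rw [h', Real.sign_zero] at h; norm_num at h
  · exact h'

lemma sign_eq_neg_one {r : ℝ} (h : Real.sign r = -1) : r < 0 := by
  rcases lt_trichotomy r 0 with h' | h' | h'
  · exact h'
  · rw [h', Real.sign_zero] at h; norm_num at h
  · rw [Real.sign_of_pos h'] at h; norm_num at h

lemma mulVec_add_smul {a b : ℕ} (W : Matrix (Fin a) (Fin b) ℝ) (u w : Fin b → ℝ) (t : ℝ)
    (j : Fin a) :
    W.mulVec (fun i => u i + t * w i) j = W.mulVec u j + t * W.mulVec w j := by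
  simp only [Matrix.mulVec, dotProduct]
  rw [Finset.mul_sum, ← Finset.sum_add_distrib]
  exact Finset.sum_congr rfl fun i _ => by ring

/-- direction vector for the subjective hidden layers -/
def sdir (N : Net L n) (s : Pat n) (v : Input n) : (k : ℕ) → Fin (n k) → ℝ
  | 0 => fun i => v i
  | k+1 => fun j => s k j * (N.sMat s k).mulVec v j

lemma Wsdir (N : Net L n) (s : Pat n) (v : Input n) :
    ∀ k (j : Fin (n (k+1))), (N.W k).mulVec (sdir N s v k) j = (N.sMat s k).mulVec v j := by
  intro k
  induction k with
  | zero => intro j; rfl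
  | succ k ih =>
    intro j
    have h1 : sdir N s v (k+1) = (Matrix.diagonal (s k)).mulVec ((N.sMat s k).mulVec v) := by
      funext i
      simp [sdir, Matrix.mulVec_diagonal]
    rw [h1, Matrix.mulVec_mulVec, Matrix.mulVec_mulVec]
    rfl

lemma shid_add (N : Net L n) (s : Pat n) (x v : Input n) (t : ℝ) :
    ∀ k (j : Fin (n k)),
      N.shid s (x + t • v) k j = N.shid s x k j + t * sdir N s v k j := by
  intro k
  induction k with
  | zero =>
    intro j
    simp [Net.shid, sdir]
  | succ k ih =>
    intro j
    have hfun : N.shid s (x + t • v) k = fun i => N.shid s x k i + t * sdir N s v k i :=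
      funext ih
    show s k j * ((N.W k).mulVec (N.shid s (x + t • v) k) j + N.b k j) = _
    rw [hfun, mulVec_add_smul, Wsdir]
    show _ = s k j * ((N.W k).mulVec (N.shid s x k) j + N.b k j)
        + t * (s k j * (N.sMat s k).mulVec v j)
    ring

lemma spreact_add (N : Net L n) (s : Pat n) (x v : Input n) (t : ℝ) (k : ℕ)
    (j : Fin (n (k+1))) :
    N.spreact s (x + t • v) k j = N.spreact s x k j + t * (N.sMat s k).mulVec v j := by
  have hfun : N.shid s (x + t • v) k = fun i => N.shid s x k i + t * sdir N s v k i :=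
    funext (shid_add N s x v t k)
  unfold Net.spreact
  rw [hfun, mulVec_add_smul, Wsdir]
  ring

lemma inner_grad (N : Net L n) (h1 : n (L+1) = 1) (s : Pat n) (v : Input n) :
    ⟪v, N.grad h1 s⟫ = (N.sMat s L).mulVec v (Fin.cast h1.symm 0) := by
  simp only [PiLp.inner_apply, RCLike.inner_apply, conj_trivial, Net.grad, Net.nvec,
    PiLp.toLp_apply, Matrix.mulVec, dotProduct]

lemma sfnet_add (N : Net L n) (h1 : n (L+1) = 1) (s : Pat n) (x v : Input n) (t : ℝ) :
    N.sfnet h1 s (x + t • v) = N.sfnet h1 s x + t * ⟪v, N.grad h1 s⟫ := by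
  rw [inner_grad]
  exact spreact_add N s x v t L _

lemma continuous_hid (N : Net L n) :
    ∀ k (j : Fin (n k)), Continuous fun y : Input n => N.hid y k j := by
  intro k
  induction k with
  | zero =>
    intro j
    exact (EuclideanSpace.proj j).continuous
  | succ k ih =>
    intro j
    show Continuous fun y : Input n => max ((N.W k).mulVec (N.hid y k) j + N.b k j) 0
    refine Continuous.max ?_ continuous_const
    refine Continuous.add ?_ continuous_const
    show Continuous fun y : Input n => ∑ i, N.W k j i * N.hid y k i
    exact continuous_finset_sum _ fun i _ => continuous_const.mul (ih i)

lemma continuous_preact (N : Net L n) (k : ℕ) (j : Fin (n (k+1))) :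
    Continuous fun y : Input n => N.preact y k j := by
  show Continuous fun y : Input n => (∑ i, N.W k j i * N.hid y k i) + N.b k j
  exact (continuous_finset_sum _ fun i _ => continuous_const.mul (continuous_hid N k i)).add
    continuous_const

lemma critical_preact_eq_zero (N : Net L n) (x : Input n) (p : Idx n)
    (hc : N.Critical x p) : N.preact x p.1 p.2 = 0 := by
  by_contra ha
  have hcont := (continuous_preact N p.1 p.2).continuousAt (x := x)
  rw [Metric.continuousAt_iff] at hcont
  obtain ⟨δ, hδpos, hball⟩ := hcont |N.preact x p.1 p.2| (abs_pos.mpr ha)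
  obtain ⟨y, z, hy, hz, hne⟩ := hc.2 δ hδpos
  have hsign : ∀ w : Input n, dist w x < δ →
      Real.sign (N.preact w p.1 p.2) = Real.sign (N.preact x p.1 p.2) := by
    intro w hw
    have h' := hball hw
    rw [Real.dist_eq] at h'
    obtain ⟨h1, h2⟩ := abs_lt.mp h'
    rcases lt_or_gt_of_ne ha with h | h
    · rw [Real.sign_of_neg h, Real.sign_of_neg (by rw [abs_of_neg h] at h2; linarith)]
    · rw [Real.sign_of_pos h, Real.sign_of_pos (by rw [abs_of_pos h] at h1; linarith)]
  exact hne (by rw [Net.Hpat, Net.Hpat, hsign y hy, hsign z hz])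

lemma dist_ray (x v : Input n) {t : ℝ} (ht : 0 < t) :
    dist (x + t • v) x = t * ‖v‖ := by
  rw [dist_eq_norm, add_sub_cancel_left, norm_smul, Real.norm_eq_abs, abs_of_pos ht]

lemma hid_affine (N : Net L n) (x v : Input n) {ε : ℝ} (hε : 0 < ε)
    (hnc : ∀ p : Idx n, p.1 < L → ¬ N.Critical x p →
      ∀ y : Input n, dist y x < ε → N.Hpat y p.1 p.2 = N.Hpat x p.1 p.2) :
    ∀ k, k ≤ L → ∃ β : Fin (n k) → ℝ, ∀ t : ℝ, 0 < t → t * ‖v‖ < ε →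
      ∀ j, N.hid (x + t • v) k j = N.hid x k j + t * β j := by
  intro k
  induction k with
  | zero =>
    intro _
    exact ⟨fun i => v i, fun t ht ht' j => by simp [Net.hid]⟩
  | succ k ih =>
    intro hk
    obtain ⟨β, hβ⟩ := ih (le_of_lt (Nat.lt_of_succ_le hk))
    set γ : Fin (n (k+1)) → ℝ := fun j => (N.W k).mulVec β j with hγdef
    refine ⟨fun j => if N.Critical x ⟨k, j⟩ then max (γ j) 0
      else if 0 < N.preact x k j then γ j else 0, ?_⟩
    intro t ht ht' j
    have hkL : k < L := Nat.lt_of_succ_le hk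
    have hdist : dist (x + t • v) x < ε := by rw [dist_ray x v ht]; exact ht'
    have hpre : N.preact (x + t • v) k j = N.preact x k j + t * γ j := by
      have hfun : N.hid (x + t • v) k = fun i => N.hid x k i + t * β i :=
        funext (hβ t ht ht')
      unfold Net.preact
      rw [hfun, mulVec_add_smul]
      ring
    show max (N.preact (x + t • v) k j) 0 = max (N.preact x k j) 0 +
      t * (if N.Critical x ⟨k, j⟩ then max (γ j) 0 else if 0 < N.preact x k j then γ j else 0)
    by_cases hcrit : N.Critical x ⟨k, j⟩
    · have ha : N.preact x k j = 0 := critical_preact_eq_zero N x ⟨k, j⟩ hcrit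
      rw [if_pos hcrit, hpre, ha]
      rw [show (0 : ℝ) + t * γ j = t * γ j by ring, show max (0:ℝ) 0 = 0 from max_self 0]
      rw [show max (t * γ j) 0 = max (t * γ j) (t * 0) by rw [mul_zero]]
      rw [← mul_max_of_nonneg _ _ ht.le]
      ring
    · rw [if_neg hcrit]
      have hsgn : Real.sign (N.preact (x + t • v) k j) = Real.sign (N.preact x k j) :=
        hnc ⟨k, j⟩ hkL hcrit _ hdist
      rcases lt_trichotomy (N.preact x k j) 0 with h | h | h
      · rw [if_neg (by linarith)]
        rw [Real.sign_of_neg h] at hsgn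
        have hneg := sign_eq_neg_one hsgn
        rw [max_eq_right hneg.le, max_eq_right h.le]
        ring
      · rw [if_neg (by rw [h]; exact lt_irrefl 0)]
        have h0 : N.preact (x + t • v) k j = 0 := by
          rw [h, Real.sign_zero] at hsgn
          exact Real.sign_eq_zero_iff.mp hsgn
        simp [h0, h]
      · rw [if_pos h]
        rw [Real.sign_of_pos h] at hsgn
        have hpos := sign_eq_one hsgn
        rw [max_eq_left hpos.le, max_eq_left h.le, hpre]

lemma Hpat_ray_const (N : Net L n) (x v : Input n) {ε : ℝ} (hε : 0 < ε)
    (hnc : ∀ p : Idx n, p.1 < L → ¬ N.Critical x p →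
      ∀ y : Input n, dist y x < ε → N.Hpat y p.1 p.2 = N.Hpat x p.1 p.2)
    {t₁ t₂ : ℝ} (ht₁ : 0 < t₁) (ht₁' : t₁ * ‖v‖ < ε) (ht₂ : 0 < t₂) (ht₂' : t₂ * ‖v‖ < ε) :
    ∀ k, k < L → ∀ j : Fin (n (k+1)),
      N.Hpat (x + t₁ • v) k j = N.Hpat (x + t₂ • v) k j := by
  intro k hk j
  by_cases hcrit : N.Critical x ⟨k, j⟩
  · obtain ⟨β, hβ⟩ := hid_affine N x v hε hnc k hk.le
    have ha : N.preact x k j = 0 := critical_preact_eq_zero N x ⟨k, j⟩ hcrit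
    have hpre : ∀ t : ℝ, 0 < t → t * ‖v‖ < ε →
        N.preact (x + t • v) k j = t * (N.W k).mulVec β j := by
      intro t ht ht'
      have hfun : N.hid (x + t • v) k = fun i => N.hid x k i + t * β i :=
        funext (hβ t ht ht')
      unfold Net.preact
      rw [hfun, mulVec_add_smul]
      have : (N.W k).mulVec (N.hid x k) j + N.b k j = 0 := ha
      linarith
    unfold Net.Hpat
    rw [hpre t₁ ht₁ ht₁', hpre t₂ ht₂ ht₂', sign_smul_pos ht₁, sign_smul_pos ht₂]
  · have e₁ := hnc ⟨k, j⟩ hk hcrit (x + t₁ • v) (by rw [dist_ray x v ht₁]; exact ht₁')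
    have e₂ := hnc ⟨k, j⟩ hk hcrit (x + t₂ • v) (by rw [dist_ray x v ht₂]; exact ht₂')
    exact e₁.trans e₂.symm

lemma fnet_eq_sfnet (N : Net L n) (h1 : n (L+1) = 1) (s : Pat n) (y : Input n)
    (hs : s ∈ N.SC y) : N.fnet h1 y = N.sfnet h1 s y := by
  have key : ∀ k, k ≤ L → ∀ j, N.hid y k j = N.shid s y k j := by
    intro k
    induction k with
    | zero => intro _ j; rfl
    | succ k ih =>
      intro hk j
      have hkL : k < L := Nat.lt_of_succ_le hk
      have hfun : N.hid y k = N.shid s y k := funext (ih hkL.le)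
      have hpre : N.spreact s y k j = N.preact y k j := by
        unfold Net.spreact Net.preact; rw [hfun]
      have hcompat := hs.2 k hkL j
      unfold Net.Hpat at hcompat
      have hpat := hs.1 k hkL j
      show max (N.preact y k j) 0 = s k j * ((N.W k).mulVec (N.shid s y k) j + N.b k j)
      have : (N.W k).mulVec (N.shid s y k) j + N.b k j = N.preact y k j := hpre
      rw [this]
      rcases lt_trichotomy (N.preact y k j) 0 with h | h | h
      · rw [Real.sign_of_neg h] at hcompat
        have hs0 : s k j = 0 := by
          rcases hpat with h0 | h0
          · exact h0
          · exfalso; rw [h0] at hcompat; norm_num at hcompat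
        rw [hs0, max_eq_right h.le, zero_mul]
      · rw [h, max_self, mul_zero]
      · rw [Real.sign_of_pos h] at hcompat
        have hs1 : s k j = 1 := by
          rcases hpat with h0 | h0
          · exfalso; rw [h0] at hcompat; norm_num at hcompat
          · exact h0
        rw [hs1, max_eq_left h.le, one_mul]
  unfold Net.fnet Net.sfnet Net.preact Net.spreact
  rw [funext (key L le_rfl)]

lemma main2 (N : Net L n) (h1 : n (L+1) = 1) (x v : Input n) (hv : v ≠ 0)
    {ε : ℝ} (hε : 0 < ε)
    (hnc : ∀ p : Idx n, p.1 < L → ¬ N.Critical x p →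
      ∀ y : Input n, dist y x < ε → N.Hpat y p.1 p.2 = N.Hpat x p.1 p.2)
    {t₀ : ℝ} (ht₀ : 0 < t₀) (ht₀' : dist (x + t₀ • v) x < ε)
    (s : Pat n) (hs : s ∈ N.SC (x + t₀ • v)) :
    Tendsto (fun t : ℝ => (N.fnet h1 (x + t • v) - N.fnet h1 x) / t)
        (𝓝[>] (0 : ℝ)) (𝓝 ⟪v, N.grad h1 s⟫) ∧
      Tendsto (fun t : ℝ => (N.sfnet h1 s (x + t • v) - N.sfnet h1 s x) / t)
        (𝓝[>] (0 : ℝ)) (𝓝 ⟪v, N.grad h1 s⟫) := by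
  have hv' : (0:ℝ) < ‖v‖ := norm_pos_iff.mpr hv
  have ht₀ε : t₀ * ‖v‖ < ε := by rw [← dist_ray x v ht₀]; exact ht₀'
  set g : ℝ := ⟪v, N.grad h1 s⟫ with hg
  have hsub : ∀ t : ℝ, N.sfnet h1 s (x + t • v) = N.sfnet h1 s x + t * g :=
    fun t => sfnet_add N h1 s x v t
  have hsubT : Tendsto (fun t : ℝ => (N.sfnet h1 s (x + t • v) - N.sfnet h1 s x) / t)
      (𝓝[>] (0:ℝ)) (𝓝 g) := by
    refine Tendsto.congr' ?_ (tendsto_const_nhds (x := g))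
    filter_upwards [self_mem_nhdsWithin] with t ht
    rw [hsub t, add_sub_cancel_left, mul_div_cancel_left₀ _ (ne_of_gt ht)]
  have hscall : ∀ t : ℝ, 0 < t → t * ‖v‖ < ε → s ∈ N.SC (x + t • v) := by
    intro t ht ht'
    refine ⟨hs.1, fun k hk j => ?_⟩
    rw [Hpat_ray_const N x v hε hnc ht ht' ht₀ ht₀ε k hk j]
    exact hs.2 k hk j
  obtain ⟨β, hβ⟩ := hid_affine N x v hε hnc L le_rfl
  set δ : ℝ := (N.W L).mulVec β (Fin.cast h1.symm 0) + 0 with hδdef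
  have hobj : ∀ t : ℝ, 0 < t → t * ‖v‖ < ε →
      N.fnet h1 (x + t • v) = N.fnet h1 x + t * δ := by
    intro t ht ht'
    have hfun : N.hid (x + t • v) L = fun i => N.hid x L i + t * β i := funext (hβ t ht ht')
    unfold Net.fnet Net.preact
    rw [hfun, mulVec_add_smul, hδdef]
    ring
  set t₁ : ℝ := ε / (2 * ‖v‖) with ht₁def
  set t₂ : ℝ := ε / (4 * ‖v‖) with ht₂def
  have ht₁pos : 0 < t₁ := by positivity
  have ht₂pos : 0 < t₂ := by positivity
  have ht₁ε : t₁ * ‖v‖ < ε := by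
    have h' : t₁ * ‖v‖ = ε / 2 := by rw [ht₁def]; field_simp
    rw [h']; linarith
  have ht₂ε : t₂ * ‖v‖ < ε := by
    have h' : t₂ * ‖v‖ = ε / 4 := by rw [ht₂def]; field_simp
    rw [h']; linarith
  have e₁ : N.fnet h1 x + t₁ * δ = N.sfnet h1 s x + t₁ * g := by
    have h' := fnet_eq_sfnet N h1 s (x + t₁ • v) (hscall t₁ ht₁pos ht₁ε)
    rw [hobj t₁ ht₁pos ht₁ε, hsub t₁] at h'
    exact h'
  have e₂ : N.fnet h1 x + t₂ * δ = N.sfnet h1 s x + t₂ * g := by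
    have h' := fnet_eq_sfnet N h1 s (x + t₂ • v) (hscall t₂ ht₂pos ht₂ε)
    rw [hobj t₂ ht₂pos ht₂ε, hsub t₂] at h'
    exact h'
  have ht₁₂ : t₂ < t₁ := by
    rw [ht₁def, ht₂def]
    apply div_lt_div_of_pos_left hε (by positivity)
    linarith
  have hδg : δ = g := by
    have h12 : (t₁ - t₂) * (δ - g) = 0 := by linear_combination e₁ - e₂
    rcases mul_eq_zero.mp h12 with h | h
    · exfalso; linarith
    · linarith
  have hobjT : Tendsto (fun t : ℝ => (N.fnet h1 (x + t • v) - N.fnet h1 x) / t)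
      (𝓝[>] (0:ℝ)) (𝓝 g) := by
    refine Tendsto.congr' ?_ (tendsto_const_nhds (x := g))
    have hmem : Set.Ioo (0:ℝ) (ε / ‖v‖) ∈ 𝓝[>] (0:ℝ) :=
      Ioo_mem_nhdsGT_of_mem ⟨le_refl 0, by positivity⟩
    filter_upwards [hmem] with t ht
    obtain ⟨ht0, htT⟩ := ht
    have ht' : t * ‖v‖ < ε := (lt_div_iff₀ hv').mp htT
    rw [hobj t ht0 ht', hδg, add_sub_cancel_left, mul_div_cancel_left₀ _ (ne_of_gt ht0)]
  exact ⟨hobjT, hsubT⟩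

end Aux

/-- Lemma 14: for every `x` and non-zero `v`, the one-sided directional
derivative `lim_{t↘0} (f(x+tv) - f(x))/t` exists; moreover, if `ε* > 0` is such that
`H(y)_{lj}` is constant on `B_{ε*}(x)` for all `(l,j) ∈ I \ C(x)`, if `t* > 0` is small
enough that `x + t*v ∈ B_{ε*}(x)` and if `s ∈ S^C(x + t*v)`, then both the objective and the
subjective difference quotients converge to `⟨v, ∇_s⟩`. -/
theorem statement19 {L : ℕ} {n : ℕ → ℕ} (N : Net L n) (h1 : n (L+1) = 1)
    (x v : Input n) (hv : v ≠ 0) :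
    (∃ c : ℝ, Tendsto (fun t : ℝ => (N.fnet h1 (x + t • v) - N.fnet h1 x) / t)
        (𝓝[>] (0 : ℝ)) (𝓝 c)) ∧
      ∀ ε : ℝ, 0 < ε →
        (∀ p : Idx n, p.1 < L → ¬ N.Critical x p →
          ∀ y : Input n, dist y x < ε → N.Hpat y p.1 p.2 = N.Hpat x p.1 p.2) →
        ∀ t₀ : ℝ, 0 < t₀ → dist (x + t₀ • v) x < ε →
          ∀ s ∈ N.SC (x + t₀ • v),
            Tendsto (fun t : ℝ => (N.fnet h1 (x + t • v) - N.fnet h1 x) / t)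
              (𝓝[>] (0 : ℝ)) (𝓝 ⟪v, N.grad h1 s⟫) ∧
            Tendsto (fun t : ℝ => (N.sfnet h1 s (x + t • v) - N.sfnet h1 s x) / t)
              (𝓝[>] (0 : ℝ)) (𝓝 ⟪v, N.grad h1 s⟫) := by
  constructor
  · -- existence of the one-sided directional derivative
    have hv' : (0:ℝ) < ‖v‖ := norm_pos_iff.mpr hv
    have hE : ∀ k : ℕ, ∀ j : Fin (n (k+1)), ∃ e : ℝ, 0 < e ∧
        (k < L → ¬ N.Critical x ⟨k, j⟩ →
          ∀ y : Input n, dist y x < e → N.Hpat y k j = N.Hpat x k j) := by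
      intro k j
      by_cases h : k < L ∧ ¬ N.Critical x ⟨k, j⟩
      · have hna : ¬ ∀ ε > (0:ℝ), ∃ y z : Input n, dist y x < ε ∧ dist z x < ε ∧
            N.Hpat y k j ≠ N.Hpat z k j := fun hh => h.2 ⟨h.1, hh⟩
        push_neg at hna
        obtain ⟨e, he, hprop⟩ := hna
        exact ⟨e, he, fun _ _ y hy =>
          hprop y x hy (by rw [dist_self]; exact he)⟩
      · exact ⟨1, one_pos, fun hk hc => absurd ⟨hk, hc⟩ h⟩
    choose E hEpos hEprop using hE
    set Fs : Finset ℝ := insert 1 ((Finset.range L).biUnion fun k =>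
      Finset.univ.image fun j : Fin (n (k+1)) => E k j) with hFs
    have hFsne : Fs.Nonempty := ⟨1, Finset.mem_insert_self 1 _⟩
    set ε : ℝ := Fs.min' hFsne with hεdef
    have hεpos : 0 < ε := by
      rw [hεdef, Finset.lt_min'_iff]
      intro b hb
      rw [hFs, Finset.mem_insert] at hb
      rcases hb with rfl | hb
      · exact one_pos
      · obtain ⟨k, _, hb⟩ := Finset.mem_biUnion.mp hb
        obtain ⟨j, _, rfl⟩ := Finset.mem_image.mp hb
        exact hEpos k j
    have hnc : ∀ p : Idx n, p.1 < L → ¬ N.Critical x p →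
        ∀ y : Input n, dist y x < ε → N.Hpat y p.1 p.2 = N.Hpat x p.1 p.2 := by
      intro p hp hcrit y hy
      have hmem : E p.1 p.2 ∈ Fs := by
        rw [hFs]
        apply Finset.mem_insert_of_mem
        exact Finset.mem_biUnion.mpr
          ⟨p.1, Finset.mem_range.mpr hp, Finset.mem_image_of_mem _ (Finset.mem_univ _)⟩
      exact hEprop p.1 p.2 hp hcrit y (lt_of_lt_of_le hy (Finset.min'_le _ _ hmem))
    set t₀ : ℝ := ε / (2 * ‖v‖) with ht₀def
    have ht₀pos : 0 < t₀ := by positivity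
    have ht₀dist : dist (x + t₀ • v) x < ε := by
      rw [Aux.dist_ray x v ht₀pos]
      have h' : t₀ * ‖v‖ = ε / 2 := by rw [ht₀def]; field_simp
      rw [h']; linarith
    set s : Pat n := fun k j => if 0 < N.preact (x + t₀ • v) k j then (1:ℝ) else 0 with hsdef
    have hsSC : s ∈ N.SC (x + t₀ • v) := by
      constructor
      · intro k _ j
        have hsj : s k j = if 0 < N.preact (x + t₀ • v) k j then (1:ℝ) else 0 := rfl
        by_cases h : 0 < N.preact (x + t₀ • v) k j
        · right; rw [hsj, if_pos h]
        · left; rw [hsj, if_neg h]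
      · intro k hk j
        have hsj : s k j = if 0 < N.preact (x + t₀ • v) k j then (1:ℝ) else 0 := rfl
        unfold Net.Hpat
        rcases lt_trichotomy (N.preact (x + t₀ • v) k j) 0 with h | h | h
        · rw [Real.sign_of_neg h, hsj, if_neg h.not_gt]
          norm_num
        · rw [h, Real.sign_zero, zero_mul]
        · rw [Real.sign_of_pos h, hsj, if_pos h]
          norm_num
    exact ⟨_, (Aux.main2 N h1 x v hv hεpos hnc ht₀pos ht₀dist s hsSC).1⟩
  · intro ε hε hnc t₀ ht₀ ht₀' s hs
    exact Aux.main2 N h1 x v hv hε hnc ht₀ ht₀' s hs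


end DRLP
end
end
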